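/- Let (W,S) be a Coxeter group and let {J_i} be a family of subsets of S. Then for x, y ∈ W, we have x^{J_i} ≤ y^{J_i} for all i if and only if x^{∩_i J_i} ≤ y^{∩_i J_i}. -/

import Mathlib

namespace Paper

open CoxeterSystem List

open scoped Classical

variable {B : Type*} {W : Type*} [Group W] {M : CoxeterMatrix B}

/-- One step in the Bruhat order: multiply on the right by a reflection, increasing length. -/
def BruhatStep (cs : CoxeterSystem M W) (u v : W) : Prop :=
  ∃ t : W, cs.IsReflection t ∧ v = u * t ∧ cs.length u < cs.length v

/-- The Bruhat order on the Coxeter group `W`. -/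
def BruhatLE (cs : CoxeterSystem M W) (u v : W) : Prop :=
  Relation.ReflTransGen (BruhatStep cs) u v

/-- Strict Bruhat order. -/
def BruhatLT (cs : CoxeterSystem M W) (u v : W) : Prop :=
  BruhatLE cs u v ∧ u ≠ v

/-- The standard parabolic subgroup `W_J` generated by the simple reflections in `J`. -/
def parabolic (cs : CoxeterSystem M W) (J : Set B) : Subgroup W :=
  Subgroup.closure (cs.simple '' J)

/-- `m` is the minimal-length representative `x^J` of the coset `x W_J`. -/
def IsMinRep (cs : CoxeterSystem M W) (J : Set B) (x m : W) : Prop :=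
  x⁻¹ * m ∈ parabolic cs J ∧
    ∀ y : W, x⁻¹ * y ∈ parabolic cs J → cs.length m ≤ cs.length y

variable (cs : CoxeterSystem M W)

local prefix:100 "s" => cs.simple
local prefix:100 "π" => cs.wordProd
local prefix:100 "ℓ" => cs.length
local prefix:100 "ris" => cs.rightInvSeq

/-- One step of the eta (parity) representation. -/
noncomputable def eta (i : B) : Function.End (W × ZMod 2) :=
  fun p => (s i * p.1 * s i, p.2 + if p.1 = s i then 1 else 0)

lemma eta_pow_pair (i j : B) (n : ℕ) (t : W) (ε : ZMod 2) :
    ((eta cs i * eta cs j) ^ n) (t, ε) =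
      ((s i * s j) ^ n * t * ((s i * s j) ^ n)⁻¹,
        ε + ∑ k ∈ Finset.range n,
          ((if t = ((s i * s j) ^ (2 * k))⁻¹ * s j then 1 else 0)
            + (if t = ((s i * s j) ^ (2 * k + 1))⁻¹ * s j then (1 : ZMod 2) else 0))) := by
  have hbinv : (s j)⁻¹ = s j := cs.inv_simple j
  have hainv : (s i)⁻¹ = s i := cs.inv_simple i
  set a := s i with ha
  set b := s j with hb
  set p := a * b with hp
  have hbb : b * b = 1 := cs.simple_mul_simple_self j
  have haa : a * a = 1 := cs.simple_mul_simple_self i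
  have hq : p⁻¹ = b * a := by rw [hp, mul_inv_rev, hbinv, hainv]
  have hconj : ∀ m : ℕ, b * p ^ m * b⁻¹ = (p ^ m)⁻¹ := by
    intro m
    have h1 : b * p * b⁻¹ = p⁻¹ := by
      rw [hbinv, hq, hp]
      rw [show b * (a * b) * b = (b * a) * (b * b) by group, hbb, mul_one]
    calc b * p ^ m * b⁻¹ = (b * p * b⁻¹) ^ m := by rw [conj_pow]
    _ = (p⁻¹) ^ m := by rw [h1]
    _ = (p ^ m)⁻¹ := by rw [inv_pow]
  have hcomm : ∀ m : ℕ, b * p ^ m = (p ^ m)⁻¹ * b := by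
    intro m
    have := hconj m
    rw [hbinv] at this
    rw [← this, mul_assoc, hbb, mul_one]
  have key1 : ∀ m : ℕ, (p ^ m)⁻¹ * b * p ^ m = (p ^ (2 * m))⁻¹ * b := by
    intro m
    rw [mul_assoc, hcomm m, ← mul_assoc, ← mul_inv_rev, ← pow_add, two_mul]
  have key2 : ∀ m : ℕ, (p ^ m)⁻¹ * (b * a * b) * p ^ m = (p ^ (2 * m + 1))⁻¹ * b := by
    intro m
    have hbab : b * a * b = p⁻¹ * b := by rw [hq]
    rw [hbab, ← mul_assoc, mul_assoc ((p ^ m)⁻¹ * p⁻¹) b (p ^ m), hcomm m]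
    rw [show (p ^ m)⁻¹ * p⁻¹ * ((p ^ m)⁻¹ * b) = ((p ^ m)⁻¹ * p⁻¹ * (p ^ m)⁻¹) * b by group]
    congr 1
    rw [← mul_inv_rev, ← mul_inv_rev]
    congr 1
    rw [show 2 * m + 1 = m + 1 + m by ring, pow_add, pow_succ]
    exact (mul_assoc _ _ _).symm
  have cond1 : ∀ m : ℕ, ∀ u : W, (p ^ m * u * (p ^ m)⁻¹ = b) ↔ (u = (p ^ (2 * m))⁻¹ * b) := by
    intro m u
    rw [← key1 m]
    constructor
    · intro h; rw [← h]; group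
    · intro h; rw [h]; group
  have cond2 : ∀ m : ℕ, ∀ u : W, (b * (p ^ m * u * (p ^ m)⁻¹) * b = a)
      ↔ (u = (p ^ (2 * m + 1))⁻¹ * b) := by
    intro m u
    have h0 : (b * (p ^ m * u * (p ^ m)⁻¹) * b = a) ↔ (p ^ m * u * (p ^ m)⁻¹ = b * a * b) := by
      constructor
      · intro h; rw [← h]
        rw [show b * (b * (p ^ m * u * (p ^ m)⁻¹) * b) * b
            = (b * b) * (p ^ m * u * (p ^ m)⁻¹) * (b * b) by group, hbb, one_mul, mul_one]
      · intro h; rw [h]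
        rw [show b * (b * a * b) * b = (b * b) * a * (b * b) by group, hbb, one_mul, mul_one]
    rw [h0, ← key2 m]
    constructor
    · intro h; rw [← h]; group
    · intro h; rw [h]; group
  induction n with
  | zero =>
      show (t, ε) = _
      simp
  | succ n ih =>
      rw [pow_succ']
      have happ : ∀ (f g : Function.End (W × ZMod 2)) (x : W × ZMod 2), (f * g) x = f (g x) :=
        fun _ _ _ => rfl
      rw [happ, ih, happ]
      simp only [eta, ← ha, ← hb]
      rw [Prod.mk.injEq]
      constructor
      · rw [show a * (b * (p ^ n * t * (p ^ n)⁻¹) * b) * a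
            = (a * b) * (p ^ n * t * (p ^ n)⁻¹) * (b * a) by group, ← hp, ← hq]
        rw [pow_succ']
        group
      · simp only [cond1 n, cond2 n]
        rw [Finset.sum_range_succ]
        ring

lemma eta_liftable : M.IsLiftable (eta cs) := by
  intro i j
  funext x
  obtain ⟨t, ε⟩ := x
  show ((eta cs i * eta cs j) ^ M i j) (t, ε) = (t, ε)
  rw [eta_pow_pair]
  set m := M i j with hm
  set p := s i * s j with hp
  have hpm : p ^ m = 1 := cs.simple_mul_simple_pow i j
  have addself : ∀ z : ZMod 2, z + z = 0 := by decide
  rw [Prod.mk.injEq]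
  constructor
  · rw [hpm]; group
  · set f : ℕ → ZMod 2 := fun n => if t = (p ^ n)⁻¹ * s j then 1 else 0 with hf
    have step1 : ∀ N : ℕ, ∑ k ∈ Finset.range N, (f (2 * k) + f (2 * k + 1))
        = ∑ n ∈ Finset.range (2 * N), f n := by
      intro N
      induction N with
      | zero => simp
      | succ N ihN =>
          rw [Finset.sum_range_succ, ihN, show 2 * (N + 1) = (2 * N + 1) + 1 by ring,
            Finset.sum_range_succ, Finset.sum_range_succ, add_assoc]
    have hshift : ∀ n : ℕ, f (m + n) = f n := by
      intro n
      simp only [hf, pow_add, hpm, one_mul]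
    rw [step1, two_mul, Finset.sum_range_add]
    simp only [hshift]
    rw [addself]
    exact add_zero ε

/-- The eta homomorphism. -/
noncomputable def etaHom : W →* Function.End (W × ZMod 2) := cs.lift ⟨eta cs, eta_liftable cs⟩

lemma etaHom_simple (i : B) : etaHom cs (s i) = eta cs i := cs.lift_apply_simple _ i

lemma etaHom_wordProd (ω : List B) (t : W) (ε : ZMod 2) :
    (etaHom cs (π ω)) (t, ε) = (π ω * t * (π ω)⁻¹, ε + ((ris ω).count t : ZMod 2)) := by
  induction ω with
  | nil =>
      rw [wordProd_nil, map_one]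
      show (t, ε) = _
      simp [rightInvSeq]
  | cons i ω ih =>
      rw [wordProd_cons, map_mul]
      have happ : ∀ (f g : Function.End (W × ZMod 2)) (x : W × ZMod 2), (f * g) x = f (g x) :=
        fun _ _ _ => rfl
      rw [happ, ih, etaHom_simple]
      show (s i * (π ω * t * (π ω)⁻¹) * s i, _ + if π ω * t * (π ω)⁻¹ = s i then 1 else 0) = _
      have hris : ris (i :: ω) = ((π ω)⁻¹ * s i * π ω) :: ris ω := rfl
      rw [Prod.mk.injEq]
      constructor
      · rw [mul_inv_rev, cs.inv_simple]
        group
      · rw [hris, List.count_cons]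
        have hiff : ((π ω)⁻¹ * s i * π ω = t) ↔ (π ω * t * (π ω)⁻¹ = s i) := by
          constructor
          · intro h; rw [← h]; group
          · intro h
            have h2 : t = (π ω)⁻¹ * s i * π ω := by rw [← h]; group
            exact h2.symm
        by_cases hc : π ω * t * (π ω)⁻¹ = s i
        · simp only [if_pos hc, beq_iff_eq, if_pos (hiff.mpr hc)]
          push_cast
          show ε + _ + 1 = ε + (_ + 1)
          ring
        · simp only [if_neg hc, beq_iff_eq, if_neg (fun hh => hc (hiff.mp hh))]
          push_cast
          show ε + _ + 0 = ε + (_ + 0)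
          ring

lemma count_ris_parity {ω ω' : List B} (h : π ω = π ω') (t : W) :
    (((ris ω).count t : ZMod 2)) = ((ris ω').count t : ZMod 2) := by
  have h1 := etaHom_wordProd cs ω t 0
  have h2 := etaHom_wordProd cs ω' t 0
  rw [h] at h1
  rw [h1] at h2
  have := congrArg Prod.snd h2
  simpa using this

lemma rightInvSeq_append (α β : List B) :
    ris (α ++ β) = ((ris α).map fun r => (π β)⁻¹ * r * π β) ++ ris β := by
  induction α with
  | nil => simp
  | cons i α ih =>
      have h1 : ris ((i :: α) ++ β) = (π (α ++ β))⁻¹ * s i * π (α ++ β) :: ris (α ++ β) := rfl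
      have h2 : ris (i :: α) = (π α)⁻¹ * s i * π α :: ris α := rfl
      rw [show (i :: α) ++ β = i :: (α ++ β) from rfl] at *
      rw [h1, ih, h2, List.map_cons]
      rw [cs.wordProd_append]
      congr 1
      rw [mul_inv_rev]
      group

lemma conj_injective (x y : W) : Function.Injective (fun r : W => x * r * y) := by
  intro r r' h
  simp only [mul_assoc] at h
  exact mul_right_cancel (mul_left_cancel h)

lemma count_ris_palindrome (κ : List B) (j : B) :
    (((ris (κ ++ ([j] ++ κ.reverse))).count (π κ * s j * (π κ)⁻¹) : ZMod 2)) = 1 := by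
  set v := π κ with hv
  set t := v * s j * v⁻¹ with htdef
  have addself : ∀ z : ZMod 2, z + z = 0 := by decide
  rw [rightInvSeq_append cs κ ([j] ++ κ.reverse), rightInvSeq_append cs [j] κ.reverse]
  have hπ1 : π ([j] ++ κ.reverse) = s j * v⁻¹ := by
    rw [cs.wordProd_append, cs.wordProd_singleton, cs.wordProd_reverse]
  have hπrev : π κ.reverse = v⁻¹ := cs.wordProd_reverse κ
  rw [hπ1, hπrev]
  rw [List.count_append, List.count_append]
  have hf1 : (fun r : W => (s j * v⁻¹)⁻¹ * r * (s j * v⁻¹)) = fun r : W =>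
      (v * (s j)⁻¹ * r * (s j * v⁻¹)) := by
    funext r; rw [mul_inv_rev, inv_inv]
  have c1 : ((ris κ).map fun r => (s j * v⁻¹)⁻¹ * r * (s j * v⁻¹)).count t
      = (ris κ).count (s j) := by
    rw [hf1]
    have := List.count_map_of_injective (ris κ) _ (conj_injective (v * (s j)⁻¹) (s j * v⁻¹)) (s j)
    rw [show v * (s j)⁻¹ * (s j) * (s j * v⁻¹) = t by rw [htdef]; group]
      at this
    exact this
  have c2 : ((ris [j]).map fun r => (v⁻¹)⁻¹ * r * v⁻¹).count t = 1 := by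
    have : ris [j] = [s j] := by simp
    rw [this]
    simp only [List.map_cons, List.map_nil, inv_inv]
    rw [List.count_singleton']
    rw [if_pos]
    rw [htdef]
  have c3 : ((ris κ.reverse).count t : ZMod 2) = ((ris κ).count (s j) : ZMod 2) := by
    have hpar := count_ris_parity cs (ω := κ.reverse ++ κ) (ω' := ([] : List B))
      (by rw [cs.wordProd_append, cs.wordProd_reverse, cs.wordProd_nil, inv_mul_cancel]) (s j)
    rw [rightInvSeq_append] at hpar
    simp only [rightInvSeq_nil, List.count_nil] at hpar
    rw [List.count_append] at hpar
    have hmap : ((ris κ.reverse).map fun r => (π κ)⁻¹ * r * π κ).count (s j)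
        = (ris κ.reverse).count t := by
      have := List.count_map_of_injective (ris κ.reverse) _
        (conj_injective (π κ)⁻¹ (π κ)) t
      rw [show (π κ)⁻¹ * t * π κ = s j by rw [htdef, ← hv]; group] at this
      exact this
    rw [hmap] at hpar
    push_cast at hpar
    have hneg : ∀ z : ZMod 2, -z = z := by decide
    exact (eq_neg_of_add_eq_zero_left hpar).trans (hneg _)
  rw [c1, c2]
  push_cast
  rw [c3]
  generalize ((ris κ).count (s j) : ZMod 2) = z
  revert z
  decide

lemma count_ris_odd {w t : W} (ht : cs.IsRightInversion w t) {ω : List B}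
    (hω : cs.IsReduced ω) (hπ : π ω = w) : ((ris ω).count t : ZMod 2) = 1 := by
  obtain ⟨href, hlen⟩ := ht
  obtain ⟨v0, j, htv⟩ := href
  obtain ⟨κ, hκ⟩ := cs.wordProd_surjective v0
  obtain ⟨τ, hτred, hτ⟩ := cs.exists_reduced_word' (w * t)
  have htt : t * t = 1 := by
    rw [htv]
    rw [show v0 * cs.simple j * v0⁻¹ * (v0 * cs.simple j * v0⁻¹)
        = v0 * (cs.simple j * cs.simple j) * v0⁻¹ by group]
    rw [cs.simple_mul_simple_self j]
    group
  have hmem : t ∉ ris τ := by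
    intro hmem
    have h2 := cs.isRightInversion_of_mem_rightInvSeq hτred hmem
    rw [← hτ] at h2
    have h3 : w * t * t = w := by rw [mul_assoc, htt, mul_one]
    have h4 := h2.2
    rw [h3] at h4
    omega
  set ρ : List B := κ ++ ([j] ++ κ.reverse) with hρ
  have hπρ : π ρ = t := by
    rw [hρ, cs.wordProd_append, cs.wordProd_append, cs.wordProd_singleton, cs.wordProd_reverse,
      htv, hκ]
    group
  have hπω' : π (τ ++ ρ) = π ω := by
    rw [cs.wordProd_append, hπρ, ← hτ, mul_assoc, htt, mul_one, hπ]
  have hcount := count_ris_parity cs hπω' t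
  rw [rightInvSeq_append, List.count_append] at hcount
  have cmap : ((ris τ).map fun r => (π ρ)⁻¹ * r * π ρ).count t = 0 := by
    have := List.count_map_of_injective (ris τ) _ (conj_injective (π ρ)⁻¹ (π ρ)) t
    rw [show (π ρ)⁻¹ * t * π ρ = t by rw [hπρ]; rw [show t⁻¹ * t * t = t by group]] at this
    rw [this]
    exact List.count_eq_zero.2 hmem
  have cpal : ((ris ρ).count t : ZMod 2) = 1 := by
    have h5 := count_ris_palindrome cs κ j
    rw [hκ, ← htv] at h5
    rw [hρ]
    exact h5
  rw [cmap] at hcount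
  push_cast at hcount
  rw [cpal] at hcount
  rw [← hcount]
  ring

lemma mem_rightInvSeq_of_isRightInversion {w t : W} (ht : cs.IsRightInversion w t)
    {ω : List B} (hω : cs.IsReduced ω) (hπ : π ω = w) : t ∈ ris ω := by
  by_contra h
  have h0 : (ris ω).count t = 0 := List.count_eq_zero.2 h
  have h1 := count_ris_odd cs ht hω hπ
  rw [h0] at h1
  exact absurd h1 (by decide)

/-- Strong exchange property. -/
lemma strong_exchange {w t : W} (ht : cs.IsRightInversion w t) {ω : List B}
    (hω : cs.IsReduced ω) (hπ : π ω = w) :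
    ∃ k, k < ω.length ∧ w * t = π (ω.eraseIdx k) := by
  have hmem := mem_rightInvSeq_of_isRightInversion cs ht hω hπ
  obtain ⟨k, hk, hkt⟩ := List.mem_iff_getElem.mp hmem
  rw [cs.length_rightInvSeq] at hk
  refine ⟨k, hk, ?_⟩
  have := cs.wordProd_mul_getD_rightInvSeq ω k
  rw [List.getD_eq_getElem _ 1 (by rw [cs.length_rightInvSeq]; exact hk), hkt, hπ] at this
  exact this

/-- Deletion property: every word contains a reduced sublist with the same product. -/
lemma exists_reduced_sublist (ω : List B) :
    ∃ ω', ω'.Sublist ω ∧ cs.IsReduced ω' ∧ π ω' = π ω := by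
  generalize hn : ω.length = n
  induction n using Nat.strong_induction_on generalizing ω with
  | _ n IH =>
  by_cases hred : cs.IsReduced ω
  · exact ⟨ω, List.Sublist.refl ω, hred, rfl⟩
  · have hwit : ¬ cs.IsReduced (ω.take ω.length) := by rw [List.take_length]; exact hred
    have hex : ∃ m, ¬ cs.IsReduced (ω.take m) := ⟨ω.length, hwit⟩
    set k := Nat.find hex with hkdef
    have hknot : ¬ cs.IsReduced (ω.take k) := Nat.find_spec hex
    have hk0 : k ≠ 0 := by
      intro h
      apply hknot
      rw [h, List.take_zero]
      show ℓ (π []) = _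
      simp
    have hkle : k ≤ ω.length := Nat.find_le hwit
    have hklt : k - 1 < ω.length := by omega
    have hkprev : cs.IsReduced (ω.take (k-1)) := by
      by_contra h
      have hcon : k ≤ k - 1 := Nat.find_le h
      omega
    set μ := ω.take (k-1) with hμ
    have h1 : μ ++ [ω[k-1]] = ω.take (k-1+1) := List.take_concat_get' ω (k-1) hklt
    have htake : ω.take k = μ ++ [ω[k-1]] := by
      conv_lhs => rw [show k = (k-1)+1 by omega]
      exact h1.symm
    have hμlen : μ.length = k - 1 := by
      rw [hμ, List.length_take]
      omega
    have hπμ : ℓ (π μ) = k - 1 := Eq.trans hkprev hμlen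
    have hinv : cs.IsRightInversion (π μ) (s ω[k-1]) := by
      constructor
      · exact cs.isReflection_simple _
      · rcases cs.length_mul_simple (π μ) ω[k-1] with h | h
        · exfalso
          apply hknot
          show ℓ (π (ω.take k)) = (ω.take k).length
          rw [htake, cs.wordProd_append, cs.wordProd_singleton, h, hπμ,
            List.length_append, hμlen]
          simp
        · omega
    obtain ⟨idx, hidx, heq⟩ := strong_exchange cs hinv hkprev rfl
    set ω'' := μ.eraseIdx idx ++ ω.drop k with hω''
    have hπω'' : π ω'' = π ω := by
      rw [hω'', cs.wordProd_append, ← heq]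
      conv_rhs => rw [← List.take_append_drop k ω]
      rw [cs.wordProd_append, htake, cs.wordProd_append, cs.wordProd_singleton]
    have hsub : ω''.Sublist ω := by
      rw [hω'']
      conv_rhs => rw [← List.take_append_drop k ω]
      apply List.Sublist.append
      · rw [htake]
        exact ((μ.eraseIdx_sublist idx).trans (List.sublist_append_left μ [ω[k-1]]))
      · exact List.Sublist.refl _
    have e1 : (μ.eraseIdx idx).length + 1 = μ.length := List.length_eraseIdx_add_one hidx
    have hlen'' : ω''.length < n := by
      rw [hω'', List.length_append, List.length_drop]
      omega
    obtain ⟨δ, hδ1, hδ2, hδ3⟩ := IH ω''.length hlen'' ω'' rfl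
    exact ⟨δ, hδ1.trans hsub, hδ2, hδ3.trans hπω''⟩

lemma BruhatLE.refl (u : W) : BruhatLE cs u u := Relation.ReflTransGen.refl

lemma BruhatLE.trans {u v w : W} (h1 : BruhatLE cs u v) (h2 : BruhatLE cs v w) :
    BruhatLE cs u w := Relation.ReflTransGen.trans h1 h2

lemma bruhatLE_of_step {u t : W} (ht : cs.IsReflection t) (hl : ℓ u < ℓ (u * t)) :
    BruhatLE cs u (u * t) := Relation.ReflTransGen.single ⟨t, ht, rfl, hl⟩

lemma length_le_of_bruhatLE {u v : W} (h : BruhatLE cs u v) : ℓ u ≤ ℓ v := by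
  induction h with
  | refl => exact le_rfl
  | tail _ hstep ih =>
      obtain ⟨t, _, rfl, hlen⟩ := hstep
      omega

lemma eq_one_of_bruhatLE_one {u : W} (h : BruhatLE cs u 1) : u = 1 := by
  have h1 := length_le_of_bruhatLE cs h
  rw [cs.length_one, Nat.le_zero, cs.length_eq_zero_iff] at h1
  exact h1

lemma BruhatLE.inv {u v : W} (h : BruhatLE cs u v) : BruhatLE cs u⁻¹ v⁻¹ := by
  induction h with
  | refl => exact BruhatLE.refl cs _
  | tail _ hstep ih =>
      obtain ⟨t, hrt, rfl, hlen⟩ := hstep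
      rename_i b _
      refine Relation.ReflTransGen.tail ih ⟨b * t * b⁻¹, hrt.conj b, ?_, ?_⟩
      · rw [mul_inv_rev, hrt.inv]
        group
      · rw [cs.length_inv, cs.length_inv]
        exact hlen

lemma mul_simple_le_of_length_lt {u : W} {i : B} (h : ℓ (u * s i) < ℓ u) :
    BruhatLE cs (u * s i) u := by
  have := bruhatLE_of_step cs (cs.isReflection_simple i) (u := u * s i)
    (by rwa [mul_assoc, cs.simple_mul_simple_self, mul_one])
  rwa [mul_assoc, cs.simple_mul_simple_self, mul_one] at this

lemma le_mul_simple_of_length_lt {u : W} {i : B} (h : ℓ u < ℓ (u * s i)) :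
    BruhatLE cs u (u * s i) := bruhatLE_of_step cs (cs.isReflection_simple i) h

lemma simple_mul_le_of_length_lt {u : W} {i : B} (h : ℓ (s i * u) < ℓ u) :
    BruhatLE cs (s i * u) u := by
  have heq : u⁻¹ * s i = (s i * u)⁻¹ := by rw [mul_inv_rev, cs.inv_simple]
  have h2 : ℓ (u⁻¹ * s i) < ℓ u⁻¹ := by
    rw [heq, cs.length_inv, cs.length_inv]
    exact h
  have h3 := (mul_simple_le_of_length_lt cs h2).inv cs
  rw [heq, inv_inv, inv_inv] at h3
  exact h3

lemma le_simple_mul_of_length_lt {u : W} {i : B} (h : ℓ u < ℓ (s i * u)) :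
    BruhatLE cs u (s i * u) := by
  have heq : u⁻¹ * s i = (s i * u)⁻¹ := by rw [mul_inv_rev, cs.inv_simple]
  have h2 : ℓ u⁻¹ < ℓ (u⁻¹ * s i) := by
    rw [heq, cs.length_inv, cs.length_inv]
    exact h
  have h3 := (le_mul_simple_of_length_lt cs h2).inv cs
  rw [heq, inv_inv, inv_inv] at h3
  exact h3

/-- Subword property, hard direction: going down along Bruhat order yields reduced sublists. -/
lemma exists_reduced_sublist_of_le {u w : W} (h : BruhatLE cs u w) :
    ∀ {ω : List B}, cs.IsReduced ω → π ω = w →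
      ∃ δ, δ.Sublist ω ∧ cs.IsReduced δ ∧ π δ = u := by
  induction h using Relation.ReflTransGen.head_induction_on with
  | refl => exact fun hred hπ => ⟨_, List.Sublist.refl _, hred, hπ⟩
  | @head a c hstep hrest ih =>
      intro ω hred hπ
      obtain ⟨t, hrt, hceq, hlen⟩ := hstep
      obtain ⟨δc, hsub, hredc, hπc⟩ := ih hred hπ
      have hact : c * t = a := by rw [hceq, mul_assoc, hrt.mul_self, mul_one]
      have hinv : cs.IsRightInversion (π δc) t := by
        refine ⟨hrt, ?_⟩
        rw [hπc, hact]
        exact hlen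
      obtain ⟨k, hk, heq⟩ := strong_exchange cs hinv hredc rfl
      obtain ⟨δ, h1, h2, h3⟩ := exists_reduced_sublist cs (δc.eraseIdx k)
      refine ⟨δ, h1.trans ((δc.eraseIdx_sublist k).trans hsub), h2, ?_⟩
      rw [h3, ← heq, hπc, hact]

/-- Joint statement: subword property (easy direction) and Deodhar's property Z. -/
lemma s1_and_z (N : ℕ) :
    (∀ ω : List B, cs.IsReduced ω → ω.length ≤ N → ∀ ω' : List B, ω'.Sublist ω →
      BruhatLE cs (π ω') (π ω)) ∧
    (∀ u w : W, ∀ i : B, BruhatLE cs u w → ℓ w ≤ N → ℓ (w * s i) = ℓ w + 1 →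
      BruhatLE cs (u * s i) (w * s i)) := by
  induction N using Nat.strong_induction_on with
  | _ N IH =>
  constructor
  · -- S1
    intro ω hred hlen ω' hsub
    rcases List.eq_nil_or_concat' ω with rfl | ⟨κ, i, rfl⟩
    · rw [List.sublist_nil] at hsub
      rw [hsub]
      exact BruhatLE.refl cs _
    · have hκred : cs.IsReduced κ := by
        have := CoxeterSystem.IsReduced.take hred (j := κ.length)
        rwa [List.take_left] at this
      have hlκ : κ.length + 1 ≤ N := by
        rw [List.length_append, List.length_singleton] at hlen
        omega
      have hup : ℓ (π κ * s i) = ℓ (π κ) + 1 := by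
        have h1 : ℓ (π (κ ++ [i])) = κ.length + 1 := by
          rw [hred]
          simp
        rw [cs.wordProd_append, cs.wordProd_singleton] at h1
        rw [h1, hκred]
      rw [List.sublist_append_iff] at hsub
      obtain ⟨a, b, rfl, ha, hb⟩ := hsub
      have hπω : π (κ ++ [i]) = π κ * s i := by
        rw [cs.wordProd_append, cs.wordProd_singleton]
      rcases List.sublist_singleton.mp hb with rfl | rfl
      · have h1 : BruhatLE cs (π a) (π κ) :=
          (IH (N-1) (by omega)).1 κ hκred (by omega) a ha
        have h2 : BruhatLE cs (π κ) (π κ * s i) := le_mul_simple_of_length_lt cs (by omega)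
        rw [List.append_nil, hπω]
        exact (h1.trans cs) h2
      · have h1 : BruhatLE cs (π a) (π κ) :=
          (IH (N-1) (by omega)).1 κ hκred (by omega) a ha
        have h2 := (IH (N-1) (by omega)).2 (π a) (π κ) i h1 (by rw [hκred]; omega) hup
        rw [hπω, cs.wordProd_append, cs.wordProd_singleton]
        exact h2
  · -- Z
    intro u w i hle hlw hup
    rcases Relation.ReflTransGen.cases_tail hle with rfl | ⟨v, huv, hstep⟩
    · exact BruhatLE.refl cs _
    · obtain ⟨t, hrt, rfl, hlvw⟩ := hstep
      rcases cs.length_mul_simple v i with hvi | hvi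
      · -- ℓ (v * s i) = ℓ v + 1
        have h1 := (IH (N-1) (by omega)).2 u v i huv (by omega) hvi
        have h2 : BruhatLE cs (v * s i) (v * t * s i) := by
          have hconj : cs.IsReflection ((s i)⁻¹ * t * s i) := by
            have := hrt.conj (s i)⁻¹
            rwa [inv_inv] at this
          have heq : v * t * s i = (v * s i) * ((s i)⁻¹ * t * s i) := by group
          rw [heq]
          exact bruhatLE_of_step cs hconj (by rw [← heq, hup, hvi]; omega)
        exact (h1.trans cs) h2
      · -- ℓ (v * s i) + 1 = ℓ v
        obtain ⟨ρ', hρred, hρπ⟩ := cs.exists_reduced_word' (v * s i)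
        have hρ'len : ρ'.length = ℓ v - 1 := by
          rw [← hρred, ← hρπ]
          omega
        have hρπ' : π (ρ' ++ [i]) = v := by
          rw [cs.wordProd_append, cs.wordProd_singleton, ← hρπ, mul_assoc,
            cs.simple_mul_simple_self, mul_one]
        have hρred' : cs.IsReduced (ρ' ++ [i]) := by
          show ℓ (π (ρ' ++ [i])) = _
          rw [hρπ', List.length_append, List.length_singleton, hρ'len]
          omega
        obtain ⟨δ, hδsub, hδred, hδπ⟩ := exists_reduced_sublist_of_le cs huv hρred' hρπ'
        rw [List.sublist_append_iff] at hδsub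
        obtain ⟨a, b, rfl, ha, hb⟩ := hδsub
        have hvsmall : ℓ v ≤ N - 1 := by omega
        have hπρ'v : π ρ' = v * s i := hρπ.symm
        rcases List.sublist_singleton.mp hb with rfl | rfl
        · rw [List.append_nil] at hδπ
          have hu_le : BruhatLE cs u (v * s i) := by
            rw [← hδπ, ← hπρ'v]
            exact (IH (N-1) (by omega)).1 ρ' hρred (by omega) a ha
          rcases cs.length_mul_simple u i with hui | hui
          · -- up: apply Z at lower level to (u, v * s i)
            have h2 := (IH (N-1) (by omega)).2 u (v * s i) i hu_le (by omega)
              (by rw [mul_assoc, cs.simple_mul_simple_self, mul_one]; omega)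
            rw [mul_assoc, cs.simple_mul_simple_self, mul_one] at h2
            have h3 : BruhatLE cs v (v * t) := bruhatLE_of_step cs hrt hlvw
            have h4 : BruhatLE cs (v * t) (v * t * s i) := le_mul_simple_of_length_lt cs (by omega)
            exact ((h2.trans cs) h3).trans cs h4
          · -- down
            have h2 : BruhatLE cs (u * s i) u := mul_simple_le_of_length_lt cs (by omega)
            have h3 : BruhatLE cs u v := huv
            have h4 : BruhatLE cs v (v * t) := bruhatLE_of_step cs hrt hlvw
            have h5 : BruhatLE cs (v * t) (v * t * s i) := le_mul_simple_of_length_lt cs (by omega)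
            exact (((h2.trans cs h3).trans cs) h4).trans cs h5
        · have hared : cs.IsReduced a := by
            have := CoxeterSystem.IsReduced.take hδred (j := a.length)
            rwa [List.take_left] at this
          have hπa : π a = u * s i := by
            have : π a * s i = u := by
              rw [← cs.wordProd_singleton, ← cs.wordProd_append, hδπ]
            rw [← this, mul_assoc, cs.simple_mul_simple_self, mul_one]
          have h1 : BruhatLE cs (u * s i) (v * s i) := by
            rw [← hπa, ← hπρ'v]
            exact (IH (N-1) (by omega)).1 ρ' hρred (by omega) a ha
          have h2 : BruhatLE cs (v * s i) v := mul_simple_le_of_length_lt cs (by omega)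
          have h3 : BruhatLE cs v (v * t) := bruhatLE_of_step cs hrt hlvw
          have h4 : BruhatLE cs (v * t) (v * t * s i) := le_mul_simple_of_length_lt cs (by omega)
          exact (((h1.trans cs h2).trans cs) h3).trans cs h4

lemma le_of_sublist_reduced {ω ω' : List B} (hred : cs.IsReduced ω) (hsub : ω'.Sublist ω) :
    BruhatLE cs (π ω') (π ω) := (s1_and_z cs ω.length).1 ω hred le_rfl ω' hsub

lemma z_right {u w : W} {i : B} (h : BruhatLE cs u w) (hup : ℓ (w * s i) = ℓ w + 1) :
    BruhatLE cs (u * s i) (w * s i) := (s1_and_z cs (ℓ w)).2 u w i h le_rfl hup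

lemma le_mul_simple_cases {u w : W} {i : B} (h : BruhatLE cs u w) (hw : ℓ (w * s i) < ℓ w) :
    BruhatLE cs u (w * s i) ∨ (ℓ (u * s i) < ℓ u ∧ BruhatLE cs (u * s i) (w * s i)) := by
  obtain ⟨ρ', hρred, hρπ⟩ := cs.exists_reduced_word' (w * s i)
  have hρ'len : ρ'.length = ℓ w - 1 := by
    rw [← hρred, ← hρπ]
    rcases cs.length_mul_simple w i with hh | hh <;> omega
  have hρπ' : π (ρ' ++ [i]) = w := by
    rw [cs.wordProd_append, cs.wordProd_singleton, ← hρπ, mul_assoc,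
      cs.simple_mul_simple_self, mul_one]
  have hρred' : cs.IsReduced (ρ' ++ [i]) := by
    show ℓ (π (ρ' ++ [i])) = _
    rw [hρπ', List.length_append, List.length_singleton, hρ'len]
    omega
  obtain ⟨δ, hδsub, hδred, hδπ⟩ := exists_reduced_sublist_of_le cs h hρred' hρπ'
  rw [List.sublist_append_iff] at hδsub
  obtain ⟨a, b, rfl, ha, hb⟩ := hδsub
  rcases List.sublist_singleton.mp hb with rfl | rfl
  · left
    rw [List.append_nil] at hδπ
    rw [← hδπ, hρπ]
    exact le_of_sublist_reduced cs hρred ha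
  · right
    have hared : cs.IsReduced a := by
      have := CoxeterSystem.IsReduced.take hδred (j := a.length)
      rwa [List.take_left] at this
    have hπa : π a = u * s i := by
      have h2 : π a * s i = u := by
        rw [← cs.wordProd_singleton, ← cs.wordProd_append, hδπ]
      rw [← h2, mul_assoc, cs.simple_mul_simple_self, mul_one]
    constructor
    · have hlen1 : ℓ (u * s i) = a.length := by rw [← hπa, hared]
      have hlen2 : ℓ u = a.length + 1 := by
        rw [← hδπ, hδred, List.length_append, List.length_singleton]
      omega
    · rw [← hπa, hρπ]
      exact le_of_sublist_reduced cs hρred ha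

lemma lift1_right {u w : W} {i : B} (h : BruhatLE cs u w) (hw : ℓ (w * s i) < ℓ w)
    (hu : ℓ (u * s i) < ℓ u) : BruhatLE cs (u * s i) (w * s i) := by
  rcases le_mul_simple_cases cs h hw with h1 | ⟨_, h1⟩
  · exact (mul_simple_le_of_length_lt cs hu).trans cs h1
  · exact h1

lemma lift2_right {u w : W} {i : B} (h : BruhatLE cs u w) (hw : ℓ (w * s i) < ℓ w)
    (hu : ℓ u < ℓ (u * s i)) : BruhatLE cs u (w * s i) := by
  rcases le_mul_simple_cases cs h hw with h1 | ⟨h2, _⟩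
  · exact h1
  · omega

lemma lift3_right {u w : W} {i : B} (h : BruhatLE cs (u * s i) (w * s i))
    (hw : ℓ (w * s i) < ℓ w) : BruhatLE cs u w := by
  have h2 := z_right cs h (i := i)
    (by rw [mul_assoc, cs.simple_mul_simple_self, mul_one]
        rcases cs.length_mul_simple w i with hh | hh <;> omega)
  rwa [mul_assoc, cs.simple_mul_simple_self, mul_one, mul_assoc, cs.simple_mul_simple_self,
    mul_one] at h2

lemma inv_simple_mul (x : W) (i : B) : (s i * x)⁻¹ = x⁻¹ * s i := by
  rw [mul_inv_rev, cs.inv_simple]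

lemma z_left {u w : W} {i : B} (h : BruhatLE cs u w) (hup : ℓ w < ℓ (s i * w)) :
    BruhatLE cs (s i * u) (s i * w) := by
  have h2 := z_right cs (h.inv cs) (i := i)
    (by rw [← inv_simple_mul, cs.length_inv, cs.length_inv]
        rcases cs.length_simple_mul w i with hh | hh <;> omega)
  rw [← inv_simple_mul, ← inv_simple_mul] at h2
  have h3 := h2.inv cs
  rwa [inv_inv, inv_inv] at h3

lemma lift1_left {u w : W} {i : B} (h : BruhatLE cs u w) (hw : ℓ (s i * w) < ℓ w)
    (hu : ℓ (s i * u) < ℓ u) : BruhatLE cs (s i * u) (s i * w) := by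
  have h2 := lift1_right cs (h.inv cs) (i := i)
    (by rw [← inv_simple_mul, cs.length_inv, cs.length_inv]; exact hw)
    (by rw [← inv_simple_mul, cs.length_inv, cs.length_inv]; exact hu)
  rw [← inv_simple_mul, ← inv_simple_mul] at h2
  have h3 := h2.inv cs
  rwa [inv_inv, inv_inv] at h3

lemma lift2_left {u w : W} {i : B} (h : BruhatLE cs u w) (hw : ℓ (s i * w) < ℓ w)
    (hu : ℓ u < ℓ (s i * u)) : BruhatLE cs u (s i * w) := by
  have h2 := lift2_right cs (h.inv cs) (i := i)
    (by rw [← inv_simple_mul, cs.length_inv, cs.length_inv]; exact hw)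
    (by rw [← inv_simple_mul, cs.length_inv, cs.length_inv]; exact hu)
  rw [← inv_simple_mul] at h2
  have h3 := h2.inv cs
  rwa [inv_inv, inv_inv] at h3

lemma lift3_left {u w : W} {i : B} (h : BruhatLE cs (s i * u) (s i * w))
    (hw : ℓ (s i * w) < ℓ w) : BruhatLE cs u w := by
  have h2 := h.inv cs
  rw [inv_simple_mul, inv_simple_mul] at h2
  have h3 := lift3_right cs h2
    (by rw [← inv_simple_mul, cs.length_inv, cs.length_inv]; exact hw)
  have h4 := h3.inv cs
  rwa [inv_inv, inv_inv] at h4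

lemma mem_parabolic_iff {J : Set B} {w : W} :
    w ∈ parabolic cs J ↔ ∃ ω : List B, (∀ b ∈ ω, b ∈ J) ∧ π ω = w := by
  constructor
  · intro h
    refine Subgroup.closure_induction (fun x hx => ?_) ?_ (fun x y _ _ ihx ihy => ?_)
      (fun x _ ihx => ?_) h
    · obtain ⟨j, hj, rfl⟩ := hx
      exact ⟨[j], by simpa using hj, cs.wordProd_singleton j⟩
    · exact ⟨[], by simp, cs.wordProd_nil⟩
    · obtain ⟨ω1, h1, hπ1⟩ := ihx
      obtain ⟨ω2, h2, hπ2⟩ := ihy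
      refine ⟨ω1 ++ ω2, ?_, by rw [cs.wordProd_append, hπ1, hπ2]⟩
      intro b hb
      rcases List.mem_append.mp hb with hb | hb
      · exact h1 b hb
      · exact h2 b hb
    · obtain ⟨ω1, h1, hπ1⟩ := ihx
      exact ⟨ω1.reverse, fun b hb => h1 b (List.mem_reverse.mp hb),
        by rw [cs.wordProd_reverse, hπ1]⟩
  · rintro ⟨ω, hω, rfl⟩
    induction ω with
    | nil => exact (parabolic cs J).one_mem
    | cons i ω ih =>
        rw [cs.wordProd_cons]
        refine (parabolic cs J).mul_mem ?_ (ih (fun b hb => hω b (List.mem_cons_of_mem i hb)))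
        exact Subgroup.subset_closure ⟨i, hω i (List.mem_cons_self), rfl⟩

lemma simple_mem_parabolic {J : Set B} {j : B} (hj : j ∈ J) : s j ∈ parabolic cs J :=
  Subgroup.subset_closure ⟨j, hj, rfl⟩

lemma exists_reduced_Jword {J : Set B} {w : W} (h : w ∈ parabolic cs J) :
    ∃ ω : List B, cs.IsReduced ω ∧ (∀ b ∈ ω, b ∈ J) ∧ π ω = w := by
  obtain ⟨ω, hω, hπ⟩ := (mem_parabolic_iff cs).mp h
  obtain ⟨ω', hsub, hred, hπ'⟩ := exists_reduced_sublist cs ω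
  exact ⟨ω', hred, fun b hb => hω b (hsub.subset hb), by rw [hπ', hπ]⟩

lemma isMinRep_congr {J : Set B} {x x' m : W} (h : IsMinRep cs J x m)
    (hx : x⁻¹ * x' ∈ parabolic cs J) : IsMinRep cs J x' m := by
  constructor
  · have := (parabolic cs J).mul_mem ((parabolic cs J).inv_mem hx) h.1
    rwa [show (x⁻¹ * x')⁻¹ * (x⁻¹ * m) = x'⁻¹ * m by group] at this
  · intro y hy
    apply h.2
    have := (parabolic cs J).mul_mem hx hy
    rwa [show (x⁻¹ * x') * (x'⁻¹ * y) = x⁻¹ * y by group] at this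

lemma isMinRep_self {J : Set B} {x m : W} (h : IsMinRep cs J x m) : IsMinRep cs J m m :=
  isMinRep_congr cs h h.1

lemma exists_isMinRep (J : Set B) (x : W) : ∃ m, IsMinRep cs J x m := by
  have hex : ∃ n : ℕ, ∃ y, x⁻¹ * y ∈ parabolic cs J ∧ ℓ y = n :=
    ⟨ℓ x, x, by rw [inv_mul_cancel]; exact (parabolic cs J).one_mem, rfl⟩
  obtain ⟨y, hy, hylen⟩ := Nat.find_spec hex
  refine ⟨y, hy, fun y' hy' => ?_⟩
  rw [hylen]
  exact Nat.find_le ⟨y', hy', rfl⟩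

/-- Length additivity for minimal coset representatives. -/
lemma length_minRep_mul {J : Set B} {m : W} (hm : IsMinRep cs J m m) {u : W}
    (hu : u ∈ parabolic cs J) : ℓ (m * u) = ℓ m + ℓ u := by
  generalize hn : ℓ u = n
  induction n using Nat.strong_induction_on generalizing u with
  | _ n IHn =>
  rcases Nat.eq_zero_or_pos n with rfl | hpos
  · rw [cs.length_eq_zero_iff] at hn
    rw [hn, mul_one]
    omega
  · obtain ⟨ν, hνred, hνJ, hνπ⟩ := exists_reduced_Jword cs hu
    rcases List.eq_nil_or_concat' ν with rfl | ⟨ν', j, rfl⟩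
    · rw [← hνπ] at hn
      simp at hn
      omega
    · have hν'red : cs.IsReduced ν' := by
        have := CoxeterSystem.IsReduced.take hνred (j := ν'.length)
        rwa [List.take_left] at this
      have hjJ : j ∈ J := hνJ j (by simp)
      have hu' : π ν' ∈ parabolic cs J := by
        rw [mem_parabolic_iff cs]
        exact ⟨ν', fun b hb => hνJ b (List.mem_append_left _ hb), rfl⟩
      have hulen : ℓ u = ν'.length + 1 := by
        rw [← hνπ, hνred, List.length_append, List.length_singleton]
      have hu'len : ℓ (π ν') = ν'.length := hν'red
      have husj : u = π ν' * s j := by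
        rw [← hνπ, cs.wordProd_append, cs.wordProd_singleton]
      have hIH : ℓ (m * π ν') = ℓ m + ν'.length :=
        IHn ν'.length (by omega) hu' hu'len
      rcases cs.length_mul_simple (m * π ν') j with hup | hdown
      · rw [husj, ← mul_assoc, hup, hIH]
        omega
      · exfalso
        -- exchange yields a contradiction
        obtain ⟨μ, hμred, hμπ⟩ := cs.exists_reduced_word' m
        have hcat : π (μ ++ ν') = m * π ν' := by
          rw [cs.wordProd_append, ← hμπ]
        have hcatred : cs.IsReduced (μ ++ ν') := by
          show ℓ (π (μ ++ ν')) = _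
          rw [hcat, hIH, List.length_append]
          have : μ.length = ℓ m := by rw [← hμred, ← hμπ]
          omega
        have hinv : cs.IsRightInversion (m * π ν') (s j) :=
          ⟨cs.isReflection_simple j, by omega⟩
        obtain ⟨k, hk, heq⟩ := strong_exchange cs hinv hcatred hcat
        rcases Nat.lt_or_ge k μ.length with hkμ | hkμ
        · rw [List.eraseIdx_append_of_lt_length hkμ] at heq
          rw [cs.wordProd_append] at heq
          have hmem : m⁻¹ * π (μ.eraseIdx k) ∈ parabolic cs J := by
            have hexp : m⁻¹ * π (μ.eraseIdx k) = π ν' * s j * (π ν')⁻¹ := by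
              have h9 : π (μ.eraseIdx k) = m * π ν' * s j * (π ν')⁻¹ := by
                rw [heq]
                group
              rw [h9]
              group
            rw [hexp]
            refine (parabolic cs J).mul_mem ((parabolic cs J).mul_mem hu'
              (simple_mem_parabolic cs hjJ)) ((parabolic cs J).inv_mem hu')
          have hmin := hm.2 _ hmem
          have hlenbd : ℓ (π (μ.eraseIdx k)) ≤ μ.length - 1 := by
            have h1 := cs.length_wordProd_le (μ.eraseIdx k)
            have h2 : (μ.eraseIdx k).length + 1 = μ.length :=
              List.length_eraseIdx_add_one hkμ
            omega
          have hμlen : μ.length = ℓ m := by rw [← hμred, ← hμπ]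
          omega
        · rw [List.eraseIdx_append_of_length_le hkμ] at heq
          rw [cs.wordProd_append, ← hμπ] at heq
          rw [mul_assoc] at heq
          have heq2 : π ν' * s j = π (ν'.eraseIdx (k - μ.length)) := mul_left_cancel heq
          have hlt : k - μ.length < ν'.length := by
            rw [List.length_append] at hk
            omega
          have h1 := cs.length_wordProd_le (ν'.eraseIdx (k - μ.length))
          have h2 : (ν'.eraseIdx (k - μ.length)).length + 1 = ν'.length :=
            List.length_eraseIdx_add_one hlt
          have h3 : ℓ (π ν' * s j) = ℓ u := by rw [← husj]
          have h4 : ℓ (π ν' * s j) = ℓ (π (ν'.eraseIdx (k - μ.length))) := by rw [heq2]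
          omega

lemma isMinRep_unique {J : Set B} {x m m' : W} (h : IsMinRep cs J x m)
    (h' : IsMinRep cs J x m') : m = m' := by
  have hu : m⁻¹ * m' ∈ parabolic cs J := by
    have := (parabolic cs J).mul_mem ((parabolic cs J).inv_mem h.1) h'.1
    rwa [show (x⁻¹ * m)⁻¹ * (x⁻¹ * m') = m⁻¹ * m' by group] at this
  have hadd : ℓ (m * (m⁻¹ * m')) = ℓ m + ℓ (m⁻¹ * m') :=
    length_minRep_mul cs (isMinRep_self cs h) hu
  rw [show m * (m⁻¹ * m') = m' by group] at hadd
  have h1 := h.2 m' h'.1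
  have h2 := h'.2 m h.1
  have hz : ℓ (m⁻¹ * m') = 0 := by omega
  rw [cs.length_eq_zero_iff] at hz
  have h3 : m * (m⁻¹ * m') = m * 1 := by rw [hz]
  rw [show m * (m⁻¹ * m') = m' by group, mul_one] at h3
  exact h3.symm

lemma minRep_no_descent {J : Set B} {x m : W} (h : IsMinRep cs J x m) {j : B} (hj : j ∈ J) :
    ℓ (m * s j) = ℓ m + 1 := by
  have := length_minRep_mul cs (isMinRep_self cs h) (simple_mem_parabolic cs hj)
  rwa [cs.length_simple] at this

lemma isMinRep_of_no_descent {J : Set B} {x m' : W} (hmem : x⁻¹ * m' ∈ parabolic cs J)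
    (hdes : ∀ j ∈ J, ℓ m' < ℓ (m' * s j)) : IsMinRep cs J x m' := by
  obtain ⟨m, hm⟩ := exists_isMinRep cs J x
  have hu : m⁻¹ * m' ∈ parabolic cs J := by
    have := (parabolic cs J).mul_mem ((parabolic cs J).inv_mem hm.1) hmem
    rwa [show (x⁻¹ * m)⁻¹ * (x⁻¹ * m') = m⁻¹ * m' by group] at this
  by_cases h1 : m⁻¹ * m' = 1
  · have hmm : m' = m := by
      have h2 : m * (m⁻¹ * m') = m * 1 := by rw [h1]
      rwa [show m * (m⁻¹ * m') = m' by group, mul_one] at h2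
    rw [hmm]
    exact hm
  · exfalso
    obtain ⟨ν, hνred, hνJ, hνπ⟩ := exists_reduced_Jword cs hu
    rcases List.eq_nil_or_concat' ν with rfl | ⟨ν', j, rfl⟩
    · exact h1 (by rw [← hνπ, cs.wordProd_nil])
    · have hjJ : j ∈ J := hνJ j (by simp)
      have hν'mem : π ν' ∈ parabolic cs J := by
        rw [mem_parabolic_iff cs]
        exact ⟨ν', fun b hb => hνJ b (List.mem_append_left _ hb), rfl⟩
      have hν'red : cs.IsReduced ν' := by
        have := CoxeterSystem.IsReduced.take hνred (j := ν'.length)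
        rwa [List.take_left] at this
      have hadd1 : ℓ m' = ℓ m + ν'.length + 1 := by
        have := length_minRep_mul cs (isMinRep_self cs hm) hu
        rw [show m * (m⁻¹ * m') = m' by group] at this
        rw [this, ← hνπ, hνred, List.length_append, List.length_singleton]
        omega
      have hm'sj : m' * s j = m * π ν' := by
        have : m' = m * (m⁻¹ * m') := by group
        rw [this, ← hνπ, cs.wordProd_append, cs.wordProd_singleton, ← mul_assoc, mul_assoc,
          cs.simple_mul_simple_self, mul_one]
      have hadd2 : ℓ (m' * s j) = ℓ m + ν'.length := by
        rw [hm'sj, length_minRep_mul cs (isMinRep_self cs hm) hν'mem, hν'red]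
      have := hdes j hjJ
      omega

lemma isMinRep_simple_mul_of_lt {J : Set B} {x m : W} (h : IsMinRep cs J x m) {b : B}
    (hlt : ℓ (s b * m) < ℓ m) : IsMinRep cs J (s b * x) (s b * m) := by
  apply isMinRep_of_no_descent cs
  · rw [show (s b * x)⁻¹ * (s b * m) = x⁻¹ * m by group]
    exact h.1
  · intro j hj
    have hms : ℓ (m * s j) = ℓ m + 1 := minRep_no_descent cs h hj
    have hd1 : ℓ (s b * m) + 1 = ℓ m := by
      rcases cs.length_simple_mul m b with hh | hh <;> omega
    rw [mul_assoc]
    rcases cs.length_simple_mul (m * s j) b with hh | hh <;> omega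

lemma isMinRep_simple_mul_of_gt {J : Set B} {x m : W} (h : IsMinRep cs J x m) {b : B}
    (hgt : ℓ m < ℓ (s b * m)) :
    IsMinRep cs J (s b * x) (s b * m) ∨ IsMinRep cs J (s b * x) m := by
  by_cases hred : ∀ j ∈ J, ℓ (s b * m) < ℓ (s b * m * s j)
  · left
    apply isMinRep_of_no_descent cs
    · rw [show (s b * x)⁻¹ * (s b * m) = x⁻¹ * m by group]
      exact h.1
    · exact hred
  · right
    push_neg at hred
    obtain ⟨j, hjJ, hle⟩ := hred
    have hlt : ℓ (s b * m * s j) < ℓ (s b * m) :=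
      lt_of_le_of_ne hle (cs.length_mul_simple_ne (s b * m) j)
    have hinv : cs.IsRightInversion (s b * m) (s j) := ⟨cs.isReflection_simple j, hlt⟩
    obtain ⟨μ, hμred, hμπ⟩ := cs.exists_reduced_word' m
    have hgt1 : ℓ (s b * m) = ℓ m + 1 := by
      rcases cs.length_simple_mul m b with hh | hh <;> omega
    have hword : π (b :: μ) = s b * m := by rw [cs.wordProd_cons, ← hμπ]
    have hwred : cs.IsReduced (b :: μ) := by
      show ℓ (π (b :: μ)) = _
      rw [hword, List.length_cons, hgt1]
      have : μ.length = ℓ m := by rw [← hμred, ← hμπ]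
      omega
    obtain ⟨k, hk, heq⟩ := strong_exchange cs hinv hwred hword
    cases k with
    | zero =>
        rw [show (b :: μ).eraseIdx 0 = μ from rfl, ← hμπ] at heq
        -- heq : s b * m * s j = m
        have hsbm : s b * m = m * s j := by
          have h5 := congrArg (fun z => z * s j) heq
          rwa [mul_assoc, cs.simple_mul_simple_self, mul_one] at h5
        apply isMinRep_congr cs (isMinRep_self cs h)
        have hexp : m⁻¹ * (s b * x) = s j * (m⁻¹ * x) := by
          rw [show s b * x = (s b * m) * (m⁻¹ * x) by group, hsbm]
          group
        rw [hexp]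
        refine (parabolic cs J).mul_mem (simple_mem_parabolic cs hjJ) ?_
        have := (parabolic cs J).inv_mem h.1
        rwa [show (x⁻¹ * m)⁻¹ = m⁻¹ * x by group] at this
    | succ k' =>
        exfalso
        rw [show (b :: μ).eraseIdx (k' + 1) = b :: μ.eraseIdx k' from rfl,
          cs.wordProd_cons, mul_assoc] at heq
        have heq2 : m * s j = π (μ.eraseIdx k') := mul_left_cancel heq
        have hms : ℓ (m * s j) = ℓ m + 1 := minRep_no_descent cs h hjJ
        have hk' : k' < μ.length := by
          rw [List.length_cons] at hk
          omega
        have h1 := cs.length_wordProd_le (μ.eraseIdx k')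
        have h2 : (μ.eraseIdx k').length + 1 = μ.length := List.length_eraseIdx_add_one hk'
        have h3 : ℓ (m * s j) = ℓ (π (μ.eraseIdx k')) := by rw [heq2]
        have h4 : μ.length = ℓ m := by rw [← hμred, ← hμπ]
        omega

lemma minRep_le_self {J : Set B} {z m : W} (h : IsMinRep cs J z m) : BruhatLE cs m z := by
  have hmem : m⁻¹ * z ∈ parabolic cs J := by
    have := (parabolic cs J).inv_mem h.1
    rwa [show (z⁻¹ * m)⁻¹ = m⁻¹ * z by group] at this
  obtain ⟨μ, hμred, hμπ⟩ := cs.exists_reduced_word' m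
  obtain ⟨ν, hνred, hνJ, hνπ⟩ := exists_reduced_Jword cs hmem
  have hcat : π (μ ++ ν) = z := by
    rw [cs.wordProd_append, ← hμπ, hνπ]
    group
  have hcatred : cs.IsReduced (μ ++ ν) := by
    show ℓ (π (μ ++ ν)) = _
    rw [hcat, List.length_append]
    have h1 : ℓ z = ℓ m + ℓ (m⁻¹ * z) := by
      have := length_minRep_mul cs (isMinRep_self cs h) hmem
      rwa [show m * (m⁻¹ * z) = z by group] at this
    have h2 : μ.length = ℓ m := by rw [← hμred, ← hμπ]
    have h3 : ν.length = ℓ (m⁻¹ * z) := by rw [← hνred, hνπ]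
    omega
  have := le_of_sublist_reduced cs hcatred (List.sublist_append_left μ ν)
  rwa [hcat, ← hμπ] at this

lemma minRep_le_step {J : Set B} {v' v mv' mv : W} (h' : IsMinRep cs J v' mv')
    (h : IsMinRep cs J v mv) (hstep : BruhatStep cs v' v) : BruhatLE cs mv' mv := by
  obtain ⟨t, hrt, hveq, hlen⟩ := hstep
  have hle : BruhatLE cs v' v := by
    rw [hveq]
    exact bruhatLE_of_step cs hrt (by rw [← hveq]; exact hlen)
  -- reduced word of v of the form μ ++ ν
  have hmem : mv⁻¹ * v ∈ parabolic cs J := by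
    have := (parabolic cs J).inv_mem h.1
    rwa [show (v⁻¹ * mv)⁻¹ = mv⁻¹ * v by group] at this
  obtain ⟨μ, hμred, hμπ⟩ := cs.exists_reduced_word' mv
  obtain ⟨ν, hνred, hνJ, hνπ⟩ := exists_reduced_Jword cs hmem
  have hcat : π (μ ++ ν) = v := by
    rw [cs.wordProd_append, ← hμπ, hνπ]
    group
  have hcatred : cs.IsReduced (μ ++ ν) := by
    show ℓ (π (μ ++ ν)) = _
    rw [hcat, List.length_append]
    have h1 : ℓ v = ℓ mv + ℓ (mv⁻¹ * v) := by
      have := length_minRep_mul cs (isMinRep_self cs h) hmem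
      rwa [show mv * (mv⁻¹ * v) = v by group] at this
    have h2 : μ.length = ℓ mv := by rw [← hμred, ← hμπ]
    have h3 : ν.length = ℓ (mv⁻¹ * v) := by rw [← hνred, hνπ]
    omega
  obtain ⟨δ, hδsub, hδred, hδπ⟩ := exists_reduced_sublist_of_le cs hle hcatred hcat
  rw [List.sublist_append_iff] at hδsub
  obtain ⟨δ1, δ2, rfl, h1, h2⟩ := hδsub
  have hδ2J : π δ2 ∈ parabolic cs J := by
    rw [mem_parabolic_iff cs]
    exact ⟨δ2, fun b hb => hνJ b (h2.subset hb), rfl⟩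
  have hcos : v'⁻¹ * π δ1 ∈ parabolic cs J := by
    have hsplit : v' = π δ1 * π δ2 := by rw [← cs.wordProd_append, hδπ]
    rw [hsplit, show (π δ1 * π δ2)⁻¹ * π δ1 = (π δ2)⁻¹ by group]
    exact (parabolic cs J).inv_mem hδ2J
  have hmv' : IsMinRep cs J (π δ1) mv' := isMinRep_congr cs h' hcos
  have hle1 : BruhatLE cs mv' (π δ1) := minRep_le_self cs hmv'
  have hle2 : BruhatLE cs (π δ1) mv := by
    have := le_of_sublist_reduced cs hμred h1
    rwa [← hμπ] at this
  exact hle1.trans cs hle2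

/-- Projection to minimal coset representatives is monotone for the Bruhat order. -/
lemma minRep_le_of_le {J : Set B} {u v mv : W} (h : BruhatLE cs u v)
    (hv : IsMinRep cs J v mv) : ∀ mu, IsMinRep cs J u mu → BruhatLE cs mu mv := by
  induction h using Relation.ReflTransGen.head_induction_on with
  | refl =>
      intro mu hu
      rw [isMinRep_unique cs hu hv]
      exact BruhatLE.refl cs _
  | @head a c hstep hrest ih =>
      intro mu hu
      obtain ⟨mc, hmc⟩ := exists_isMinRep cs J c
      exact (minRep_le_step cs hu hmc hstep).trans cs (ih mc hmc)

/-- Entries of the bilinear form of the geometric representation. -/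
noncomputable def geomB (M : CoxeterMatrix B) (k l : B) : ℝ := - Real.cos (Real.pi / (M k l))

/-- The linear functional `v ↦ B(v, α_k)`. -/
noncomputable def geomForm (M : CoxeterMatrix B) (k : B) : (B →₀ ℝ) →ₗ[ℝ] ℝ :=
  Finsupp.linearCombination ℝ (fun p => geomB M p k)

/-- The geometric reflection associated to `k`. -/
noncomputable def geomRefl (M : CoxeterMatrix B) (k : B) : Module.End ℝ (B →₀ ℝ) :=
  LinearMap.id - ((2 : ℝ) • ((geomForm M k).smulRight (Finsupp.single k 1)))


lemma geomB_self (k : B) : geomB M k k = 1 := by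
  rw [geomB, M.diagonal k]
  norm_num

lemma geomForm_single (k l : B) : geomForm M k (Finsupp.single l 1) = geomB M l k := by
  rw [geomForm, Finsupp.linearCombination_single, one_smul]

lemma geomRefl_apply (k : B) (v : B →₀ ℝ) :
    geomRefl M k v = v - (2 * geomForm M k v) • Finsupp.single k 1 := by
  rw [geomRefl, LinearMap.sub_apply, LinearMap.id_apply, LinearMap.smul_apply,
    LinearMap.smulRight_apply, smul_smul]

lemma geomRefl_apply_perp (k : B) {v : B →₀ ℝ} (hv : geomForm M k v = 0) :
    geomRefl M k v = v := by
  rw [geomRefl_apply, hv]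
  simp

lemma geomRefl_sq (k : B) : geomRefl M k * geomRefl M k = 1 := by
  apply LinearMap.ext
  intro v
  rw [Module.End.mul_apply, geomRefl_apply, geomRefl_apply, map_sub, map_smul, geomForm_single,
    geomB_self, Module.End.one_apply]
  rw [smul_eq_mul, mul_one]
  have : (2 * (geomForm M k v - 2 * geomForm M k v)) = -(2 * geomForm M k v) := by ring
  rw [this]
  module

private lemma trig1 (θ x : ℝ) : Real.sin (x + 2*θ)
    = Real.sin x * (4 * Real.cos θ^2 - 1) - Real.sin (x - θ) * (2 * Real.cos θ) := by
  rw [Real.sin_add, Real.cos_two_mul, Real.sin_two_mul, Real.sin_sub]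
  ring

private lemma trig2 (θ x : ℝ) :
    Real.sin (x + θ) = Real.sin x * (2 * Real.cos θ) - Real.sin (x - θ) := by
  rw [Real.sin_add, Real.sin_sub]
  ring

set_option maxHeartbeats 1000000 in
lemma geomRefl_pair (k l : B) (hkl : k ≠ l) (hm : 2 ≤ M k l) :
    (geomRefl M k * geomRefl M l) ^ (M k l) = 1 := by
  set m := M k l with hmdef
  set θ : ℝ := Real.pi / m with hθ
  set c : ℝ := Real.cos θ with hc
  set sθ : ℝ := Real.sin θ with hsθ
  have hmR : (m : ℝ) ≥ 2 := by exact_mod_cast hm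
  have hθpos : 0 < θ := by
    rw [hθ]
    apply div_pos Real.pi_pos
    linarith
  have hθlt : θ < Real.pi := by
    rw [hθ]
    rw [div_lt_iff₀ (by linarith : (0:ℝ) < m)]
    nlinarith [Real.pi_pos]
  have hs : 0 < sθ := Real.sin_pos_of_pos_of_lt_pi hθpos hθlt
  have hmθ : (m : ℝ) * θ = Real.pi := by
    rw [hθ]
    field_simp
  set ek : B →₀ ℝ := Finsupp.single k 1 with hek
  set el : B →₀ ℝ := Finsupp.single l 1 with hel
  have hfkk : geomForm M k ek = 1 := by rw [hek, geomForm_single, geomB_self]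
  have hfll : geomForm M l el = 1 := by rw [hel, geomForm_single, geomB_self]
  have hfkl : geomForm M k el = -c := by
    rw [hel, geomForm_single, geomB, M.symmetric l k, ← hmdef, hc, hθ]
  have hflk : geomForm M l ek = -c := by
    rw [hek, geomForm_single, geomB, ← hmdef, hc, hθ]
  set g : Module.End ℝ (B →₀ ℝ) := geomRefl M k * geomRefl M l with hg
  have hrk_ek : geomRefl M k ek = (-1 : ℝ) • ek := by
    rw [geomRefl_apply, hfkk, ← hek]
    module
  have hrk_el : geomRefl M k el = el + (2*c) • ek := by
    rw [geomRefl_apply, hfkl, ← hek]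
    module
  have hrl_ek : geomRefl M l ek = ek + (2*c) • el := by
    rw [geomRefl_apply, hflk, ← hel]
    module
  have hrl_el : geomRefl M l el = (-1 : ℝ) • el := by
    rw [geomRefl_apply, hfll, ← hel]
    module
  have hgek : g ek = (4*c^2-1) • ek + (2*c) • el := by
    rw [hg, Module.End.mul_apply, hrl_ek, map_add, map_smul, hrk_ek, hrk_el]
    module
  have hgel : g el = (-(2*c)) • ek + (-1 : ℝ) • el := by
    rw [hg, Module.End.mul_apply, hrl_el, map_smul, hrk_el]
    module
  -- main induction
  have key : ∀ n : ℕ,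
      sθ • ((g ^ n) ek) = Real.sin ((2*(n:ℝ)+1)*θ) • ek + Real.sin (2*(n:ℝ)*θ) • el ∧
      sθ • ((g ^ n) el)
        = (-Real.sin (2*(n:ℝ)*θ)) • ek + (-Real.sin ((2*(n:ℝ)-1)*θ)) • el := by
    intro n
    induction n with
    | zero =>
        constructor
        · simp only [pow_zero, Module.End.one_apply, Nat.cast_zero]
          have e1 : (2*(0:ℝ)+1)*θ = θ := by ring
          have e2 : 2*(0:ℝ)*θ = 0 := by ring
          rw [e1, e2, Real.sin_zero, ← hsθ]
          module
        · simp only [pow_zero, Module.End.one_apply, Nat.cast_zero]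
          have e2 : 2*(0:ℝ)*θ = 0 := by ring
          have e3 : (2*(0:ℝ)-1)*θ = -θ := by ring
          rw [e2, e3, Real.sin_neg, Real.sin_zero, ← hsθ]
          module
    | succ n ih =>
        obtain ⟨ih1, ih2⟩ := ih
        have happ : ∀ v, (g ^ (n+1)) v = g ((g ^ n) v) := by
          intro v
          rw [pow_succ']
          rfl
        constructor
        · rw [happ, ← map_smul, ih1, map_add, map_smul, map_smul, hgek, hgel]
          have hA : Real.sin ((2*(n:ℝ)+1)*θ) * (4*c^2-1) + Real.sin (2*(n:ℝ)*θ) * (-(2*c))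
              = Real.sin ((2*((n:ℝ)+1)+1)*θ) := by
            have e1 : (2*((n:ℝ)+1)+1)*θ = ((2*(n:ℝ)+1)*θ) + 2*θ := by ring
            have e2 : ((2*(n:ℝ)+1)*θ) - θ = 2*(n:ℝ)*θ := by ring
            rw [e1, trig1 θ, e2, ← hc]
            ring
          have hB : Real.sin ((2*(n:ℝ)+1)*θ) * (2*c) + Real.sin (2*(n:ℝ)*θ) * (-1)
              = Real.sin (2*((n:ℝ)+1)*θ) := by
            have e1 : (2*((n:ℝ)+1))*θ = ((2*(n:ℝ)+1)*θ) + θ := by ring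
            have e2 : ((2*(n:ℝ)+1)*θ) - θ = 2*(n:ℝ)*θ := by ring
            rw [e1, trig2 θ, e2, ← hc]
            ring
          push_cast
          rw [← hA, ← hB]
          module
        · rw [happ, ← map_smul, ih2, map_add, map_smul, map_smul, hgek, hgel]
          have hA : (-Real.sin (2*(n:ℝ)*θ)) * (4*c^2-1) + (-Real.sin ((2*(n:ℝ)-1)*θ)) * (-(2*c))
              = -Real.sin (2*((n:ℝ)+1)*θ) := by
            have e1 : (2*((n:ℝ)+1))*θ = (2*(n:ℝ)*θ) + 2*θ := by ring
            have e2 : (2*(n:ℝ)*θ) - θ = (2*(n:ℝ)-1)*θ := by ring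
            rw [e1, trig1 θ, e2, ← hc]
            ring
          have hB : (-Real.sin (2*(n:ℝ)*θ)) * (2*c) + (-Real.sin ((2*(n:ℝ)-1)*θ)) * (-1)
              = -Real.sin ((2*((n:ℝ)+1)-1)*θ) := by
            have e1 : (2*((n:ℝ)+1)-1)*θ = (2*(n:ℝ)*θ) + θ := by ring
            have e2 : (2*(n:ℝ)*θ) - θ = (2*(n:ℝ)-1)*θ := by ring
            rw [e1, trig2 θ, e2, ← hc]
            ring
          push_cast
          rw [← hA, ← hB]
          module
  have hsin1 : Real.sin ((2*(m:ℝ)+1)*θ) = sθ := by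
    have e : (2*(m:ℝ)+1)*θ = θ + 2*Real.pi := by
      rw [show (2*(m:ℝ)+1)*θ = θ + 2*((m:ℝ)*θ) by ring, hmθ]
    rw [e, Real.sin_add_two_pi, hsθ]
  have hsin2 : Real.sin (2*(m:ℝ)*θ) = 0 := by
    have e : 2*(m:ℝ)*θ = 2*Real.pi := by
      rw [show 2*(m:ℝ)*θ = 2*((m:ℝ)*θ) by ring, hmθ]
    rw [e, Real.sin_two_pi]
  have hsin3 : Real.sin ((2*(m:ℝ)-1)*θ) = -sθ := by
    have e : (2*(m:ℝ)-1)*θ = -θ + 2*Real.pi := by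
      rw [show (2*(m:ℝ)-1)*θ = -θ + 2*((m:ℝ)*θ) by ring, hmθ]
    rw [e, Real.sin_add_two_pi, Real.sin_neg, hsθ]
  obtain ⟨k1, k2⟩ := key m
  rw [hsin1, hsin2] at k1
  rw [hsin2, hsin3] at k2
  have hek' : (g ^ m) ek = ek := by
    apply smul_right_injective (B →₀ ℝ) (ne_of_gt hs)
    show sθ • ((g ^ m) ek) = sθ • ek
    rw [k1]
    module
  have hel' : (g ^ m) el = el := by
    apply smul_right_injective (B →₀ ℝ) (ne_of_gt hs)
    show sθ • ((g ^ m) el) = sθ • el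
    rw [k2]
    module
  apply LinearMap.ext
  intro v
  rw [Module.End.one_apply]
  set A : ℝ := geomForm M k v with hA
  set Bv : ℝ := geomForm M l v with hBv
  have hd : 1 - c^2 ≠ 0 := by
    have h1 : sθ^2 + c^2 = 1 := Real.sin_sq_add_cos_sq θ
    nlinarith
  set a : ℝ := (A + c*Bv)/(1-c^2) with hadef
  set b : ℝ := (Bv + c*A)/(1-c^2) with hbdef
  set r : B →₀ ℝ := v - a • ek - b • el with hr
  have hfkr : geomForm M k r = 0 := by
    rw [hr, map_sub, map_sub, map_smul, map_smul, hfkk, hfkl, hadef, hbdef, ← hA]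
    simp only [smul_eq_mul]
    field_simp
    ring
  have hflr : geomForm M l r = 0 := by
    rw [hr, map_sub, map_sub, map_smul, map_smul, hflk, hfll, hadef, hbdef, ← hBv]
    simp only [smul_eq_mul]
    field_simp
    ring
  have hgr : (g ^ m) r = r := by
    induction m with
    | zero => rw [pow_zero, Module.End.one_apply]
    | succ n ih =>
        have happ : (g^(n+1)) r = g ((g^n) r) := by rw [pow_succ']; rfl
        rw [happ, ih, hg, Module.End.mul_apply, geomRefl_apply_perp l hflr,
          geomRefl_apply_perp k hfkr]
  have hv : v = a • ek + b • el + r := by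
    rw [hr]
    module
  rw [hv, map_add, map_add, map_smul, map_smul, hek', hel', hgr]

lemma geom_liftable (M : CoxeterMatrix B) : M.IsLiftable (geomRefl M) := by
  intro i j
  by_cases hij : i = j
  · subst hij
    rw [M.diagonal i, pow_one]
    exact geomRefl_sq i
  · rcases Nat.eq_zero_or_pos (M i j) with h0 | hpos
    · rw [h0, pow_zero]
    · have h1 : M i j ≠ 1 := M.off_diagonal i j hij
      exact geomRefl_pair i j hij (by omega)


/-- The simple reflections of a Coxeter system are pairwise distinct. -/
lemma simple_injective (cs : CoxeterSystem M W) : Function.Injective cs.simple := by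
  intro i j hij
  by_contra hne
  have hlift : (cs.lift ⟨geomRefl M, geom_liftable M⟩) (cs.simple i)
      = (cs.lift ⟨geomRefl M, geom_liftable M⟩) (cs.simple j) := by rw [hij]
  rw [cs.lift_apply_simple, cs.lift_apply_simple] at hlift
  have h1 := congrArg (fun f : Module.End ℝ (B →₀ ℝ) => (f (Finsupp.single i 1)) i) hlift
  simp only [geomRefl_apply, geomForm_single, geomB_self, Finsupp.sub_apply, Finsupp.smul_apply,
    Finsupp.single_eq_same, Finsupp.single_eq_of_ne' (Ne.symm hne), smul_eq_mul] at h1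
  norm_num at h1


lemma parabolic_mono {J J' : Set B} (h : J ⊆ J') : parabolic cs J ≤ parabolic cs J' :=
  Subgroup.closure_mono (Set.image_mono h)

/-- Letters of a reduced word of an element of a standard parabolic lie in `J`. -/
lemma mem_of_mem_reduced {J : Set B} (ω : List B) : ∀ w : W, w ∈ parabolic cs J →
    cs.IsReduced ω → π ω = w → ∀ b ∈ ω, b ∈ J := by
  induction ω with
  | nil => intro w _ _ _ b hb; simp at hb
  | cons i α ih =>
      intro w hw hred hπ b hb
      have hαred : cs.IsReduced α := by
        have := CoxeterSystem.IsReduced.drop hred (j := 1)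
        simpa using this
      have hπα : π α = s i * w := by
        rw [← hπ, cs.wordProd_cons, cs.simple_mul_simple_cancel_left]
      have hlw : ℓ w = α.length + 1 := by
        rw [← hπ, hred, List.length_cons]
      have hlsiw : ℓ (s i * w) = α.length := by
        rw [← hπα, hαred]
      obtain ⟨τ, hτred, hτJ, hτπ⟩ := exists_reduced_Jword cs hw
      have hrevred : cs.IsReduced τ.reverse := (cs.isReduced_reverse_iff τ).mpr hτred
      have hrevπ : π τ.reverse = w⁻¹ := by rw [cs.wordProd_reverse, hτπ]
      have hrinv : cs.IsRightInversion w⁻¹ (s i) := by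
        refine ⟨cs.isReflection_simple i, ?_⟩
        rw [show w⁻¹ * s i = (s i * w)⁻¹ by rw [mul_inv_rev, cs.inv_simple],
          cs.length_inv, cs.length_inv]
        omega
      obtain ⟨k, hk, heq⟩ := strong_exchange cs hrinv hrevred hrevπ
      have herased : π (τ.reverse.eraseIdx k) ∈ parabolic cs J := by
        rw [mem_parabolic_iff cs]
        exact ⟨τ.reverse.eraseIdx k,
          fun b' hb' => hτJ b' (List.mem_reverse.mp ((τ.reverse.eraseIdx_sublist k).subset hb')),
          rfl⟩
      have hsi_mem : s i ∈ parabolic cs J := by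
        have h2 : s i = w * (w⁻¹ * s i) := by group
        rw [h2, heq]
        exact (parabolic cs J).mul_mem hw herased
      have hiJ : i ∈ J := by
        obtain ⟨ω₀, hred₀, hJ₀, hπ₀⟩ := exists_reduced_Jword cs hsi_mem
        have hlen₀ : ω₀.length = 1 := by
          rw [← hred₀, hπ₀, cs.length_simple]
        obtain ⟨j, rfl⟩ := List.length_eq_one_iff.mp hlen₀
        rw [cs.wordProd_singleton] at hπ₀
        have := simple_injective cs hπ₀
        rw [← this]
        exact hJ₀ j (List.mem_singleton_self j)
      rcases List.mem_cons.mp hb with rfl | hbα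
      · exact hiJ
      · exact ih (s i * w) ((parabolic cs J).mul_mem hsi_mem hw) hαred hπα b hbα

lemma mem_parabolic_iInter {ι : Type*} {Js : ι → Set B} {w : W}
    (h : ∀ i, w ∈ parabolic cs (Js i)) : w ∈ parabolic cs (⋂ i, Js i) := by
  obtain ⟨ω, hred, hπ⟩ := cs.exists_reduced_word' w
  rw [mem_parabolic_iff cs]
  refine ⟨ω, ?_, hπ.symm⟩
  intro b hb
  rw [Set.mem_iInter]
  intro i
  exact mem_of_mem_reduced cs ω w (h i) hred hπ.symm b hb

lemma forward_aux {ι : Type*} (Js : ι → Set B) (N : ℕ) :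
    ∀ X Y : W, ∀ mxJ myJ : ι → W,
    IsMinRep cs (⋂ i, Js i) X X → IsMinRep cs (⋂ i, Js i) Y Y → ℓ Y ≤ N →
    (∀ i, IsMinRep cs (Js i) X (mxJ i)) → (∀ i, IsMinRep cs (Js i) Y (myJ i)) →
    (∀ i, BruhatLE cs (mxJ i) (myJ i)) → BruhatLE cs X Y := by
  induction N using Nat.strong_induction_on with
  | _ N IH =>
  intro X Y mxJ myJ hX hY hlY hmx hmy hle
  rcases Nat.eq_zero_or_pos (ℓ Y) with hY0 | hYpos
  · have hY1 : Y = 1 := by rwa [cs.length_eq_zero_iff] at hY0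
    subst hY1
    have hmy1 : ∀ i, myJ i = 1 := by
      intro i
      have h1 : IsMinRep cs (Js i) 1 (1 : W) :=
        ⟨by rw [mul_one, inv_one]; exact (parabolic cs (Js i)).one_mem,
          fun y _ => by rw [cs.length_one]; exact Nat.zero_le _⟩
      exact isMinRep_unique cs (hmy i) h1
    have hmx1 : ∀ i, mxJ i = 1 := fun i =>
      eq_one_of_bruhatLE_one cs (by rw [← hmy1 i]; exact hle i)
    have hXmem : ∀ i, X ∈ parabolic cs (Js i) := by
      intro i
      have h2 := (hmx i).1
      rw [hmx1 i, mul_one] at h2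
      have h3 := (parabolic cs (Js i)).inv_mem h2
      rwa [inv_inv] at h3
    have hXK : X ∈ parabolic cs (⋂ i, Js i) := mem_parabolic_iInter cs hXmem
    have h4 := hX.2 1 (by rw [mul_one]; exact (parabolic _ _).inv_mem hXK)
    rw [cs.length_one, Nat.le_zero, cs.length_eq_zero_iff] at h4
    rw [h4]
    exact BruhatLE.refl cs 1
  · have hYne : Y ≠ 1 := by
      intro h
      rw [h, cs.length_one] at hYpos
      omega
    obtain ⟨b, hbY⟩ := cs.exists_leftDescent_of_ne_one hYne
    have hbY' : ℓ (s b * Y) < ℓ Y := hbY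
    have hY' : IsMinRep cs (⋂ i, Js i) (s b * Y) (s b * Y) :=
      isMinRep_simple_mul_of_lt cs hY hbY'
    have hYY' : BruhatLE cs (s b * Y) Y := simple_mul_le_of_length_lt cs hbY'
    have hBy : ∀ i, ∃ Bi, IsMinRep cs (Js i) (s b * Y) Bi ∧
        ((ℓ (s b * myJ i) < ℓ (myJ i) ∧ Bi = s b * myJ i) ∨ (BruhatLE cs (myJ i) Bi)) := by
      intro i
      rcases lt_or_gt_of_ne (cs.length_simple_mul_ne (myJ i) b) with hlt | hgt
      · exact ⟨s b * myJ i, isMinRep_simple_mul_of_lt cs (hmy i) hlt, Or.inl ⟨hlt, rfl⟩⟩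
      · rcases isMinRep_simple_mul_of_gt cs (hmy i) hgt with hB | hB
        · exact ⟨s b * myJ i, hB, Or.inr (le_simple_mul_of_length_lt cs hgt)⟩
        · exact ⟨myJ i, hB, Or.inr (BruhatLE.refl cs _)⟩
    rcases lt_or_gt_of_ne (cs.length_simple_mul_ne X b) with hXlt | hXgt
    · -- Case A : descend both
      have hX' : IsMinRep cs (⋂ i, Js i) (s b * X) (s b * X) :=
        isMinRep_simple_mul_of_lt cs hX hXlt
      have hfam : ∀ i, ∃ A Bi, IsMinRep cs (Js i) (s b * X) A ∧
          IsMinRep cs (Js i) (s b * Y) Bi ∧ BruhatLE cs A Bi := by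
        intro i
        obtain ⟨Bi, hBi, hBcase⟩ := hBy i
        have hu : (mxJ i)⁻¹ * X ∈ parabolic cs (Js i) := by
          have := (parabolic cs (Js i)).inv_mem (hmx i).1
          rwa [show (X⁻¹ * mxJ i)⁻¹ = (mxJ i)⁻¹ * X by group] at this
        have h1 : ℓ X = ℓ (mxJ i) + ℓ ((mxJ i)⁻¹ * X) := by
          have := length_minRep_mul cs (isMinRep_self cs (hmx i)) hu
          rwa [show mxJ i * ((mxJ i)⁻¹ * X) = X by group] at this
        rcases lt_or_gt_of_ne (cs.length_simple_mul_ne (mxJ i) b) with hxlt | hxgt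
        · refine ⟨s b * mxJ i, Bi, isMinRep_simple_mul_of_lt cs (hmx i) hxlt, hBi, ?_⟩
          rcases hBcase with ⟨hylt, rfl⟩ | hyB
          · exact lift1_left cs (hle i) hylt hxlt
          · exact ((simple_mul_le_of_length_lt cs hxlt).trans cs (hle i)).trans cs hyB
        · rcases isMinRep_simple_mul_of_gt cs (hmx i) hxgt with hA | hA
          · exfalso
            have hu' : (s b * mxJ i)⁻¹ * (s b * X) ∈ parabolic cs (Js i) := by
              rwa [show (s b * mxJ i)⁻¹ * (s b * X) = (mxJ i)⁻¹ * X by group]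
            have h2 : ℓ (s b * X) = ℓ (s b * mxJ i) + ℓ ((mxJ i)⁻¹ * X) := by
              have := length_minRep_mul cs (isMinRep_self cs hA) hu'
              rw [show (s b * mxJ i) * ((s b * mxJ i)⁻¹ * (s b * X)) = s b * X by group] at this
              rwa [show (s b * mxJ i)⁻¹ * (s b * X) = (mxJ i)⁻¹ * X by group] at this
            omega
          · refine ⟨mxJ i, Bi, hA, hBi, ?_⟩
            rcases hBcase with ⟨hylt, rfl⟩ | hyB
            · exact lift2_left cs (hle i) hylt hxgt
            · exact (hle i).trans cs hyB
      choose A Bi hA hB hAB using hfam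
      have hXY' := IH (N-1) (by omega) (s b * X) (s b * Y) A Bi hX' hY' (by omega) hA hB hAB
      exact lift3_left cs hXY' hbY'
    · -- Case B : X stays
      have hfam : ∀ i, ∃ Bi, IsMinRep cs (Js i) (s b * Y) Bi ∧ BruhatLE cs (mxJ i) Bi := by
        intro i
        obtain ⟨Bi, hBi, hBcase⟩ := hBy i
        refine ⟨Bi, hBi, ?_⟩
        rcases hBcase with ⟨hylt, rfl⟩ | hyB
        · have hu : (mxJ i)⁻¹ * X ∈ parabolic cs (Js i) := by
            have := (parabolic cs (Js i)).inv_mem (hmx i).1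
            rwa [show (X⁻¹ * mxJ i)⁻¹ = (mxJ i)⁻¹ * X by group] at this
          have h1 : ℓ X = ℓ (mxJ i) + ℓ ((mxJ i)⁻¹ * X) := by
            have := length_minRep_mul cs (isMinRep_self cs (hmx i)) hu
            rwa [show mxJ i * ((mxJ i)⁻¹ * X) = X by group] at this
          have hxgt : ℓ (mxJ i) < ℓ (s b * mxJ i) := by
            rcases lt_or_gt_of_ne (cs.length_simple_mul_ne (mxJ i) b) with hxlt | hxgt
            · exfalso
              have h2 : ℓ (s b * X) ≤ ℓ (s b * mxJ i) + ℓ ((mxJ i)⁻¹ * X) := by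
                have := cs.length_mul_le (s b * mxJ i) ((mxJ i)⁻¹ * X)
                rwa [show (s b * mxJ i) * ((mxJ i)⁻¹ * X) = s b * X by group] at this
              omega
            · exact hxgt
          exact lift2_left cs (hle i) hylt hxgt
        · exact (hle i).trans cs hyB
      choose Bi hB hAB using hfam
      have hXY' := IH (N-1) (by omega) X (s b * Y) mxJ Bi hX hY' (by omega) hmx hB hAB
      exact hXY'.trans cs hYY'

/-- Proposition: for a family `{J_i}` of subsets of `S`,
`x^{J_i} ≤ y^{J_i}` for all `i` iff `x^{∩_i J_i} ≤ y^{∩_i J_i}`. -/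
theorem minRep_le_family_iff_inter {ι : Type*} (cs : CoxeterSystem M W)
    (Js : ι → Set B) (x y : W) (mx my : ι → W) (mxK myK : W)
    (hmx : ∀ i, IsMinRep cs (Js i) x (mx i)) (hmy : ∀ i, IsMinRep cs (Js i) y (my i))
    (hmxK : IsMinRep cs (⋂ i, Js i) x mxK) (hmyK : IsMinRep cs (⋂ i, Js i) y myK) :
    (∀ i, BruhatLE cs (mx i) (my i)) ↔ BruhatLE cs mxK myK := by
  have hKx : ∀ i, IsMinRep cs (Js i) mxK (mx i) := fun i =>
    isMinRep_congr cs (hmx i) (parabolic_mono cs (Set.iInter_subset Js i) hmxK.1)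
  have hKy : ∀ i, IsMinRep cs (Js i) myK (my i) := fun i =>
    isMinRep_congr cs (hmy i) (parabolic_mono cs (Set.iInter_subset Js i) hmyK.1)
  constructor
  · intro h
    exact forward_aux cs Js (cs.length myK) mxK myK mx my (isMinRep_self cs hmxK)
      (isMinRep_self cs hmyK) le_rfl hKx hKy h
  · intro h i
    exact minRep_le_of_le cs h (hKy i) (mx i) (hKx i)

end Paper
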